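/- For every binary matrix X ∈ {0,1}^{n×m} and every positive integer k, the optimal objective value of MLP_exact equals the optimal objective value of MLP(1/k). -/

import Mathlib

/-- The index set `E = {(i,j) : x_{ij} = 1}` of positive entries of `X`. -/
def Eset (n m : ℕ) (X : Fin n → Fin m → ℕ) : Finset (Fin n × Fin m) :=
  Finset.univ.filter fun p => X p.1 p.2 = 1

/-- The complement of `E`: indices `(i,j)` with `x_{ij} ≠ 1`. -/
def Ecomp (n m : ℕ) (X : Fin n → Fin m → ℕ) : Finset (Fin n × Fin m) :=
  Finset.univ.filter fun p => X p.1 p.2 ≠ 1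

/-- The set `R = {a bᵀ : a ∈ {0,1}^n \ {0}, b ∈ {0,1}^m \ {0}}` of all nonzero
rank-1 binary `n×m` matrices, as a `Finset` (each pair of nonzero binary vectors is
encoded by a pair of nonzero Boolean vectors). -/
def Rset (n m : ℕ) : Finset (Fin n → Fin m → ℕ) :=
  ((Finset.univ : Finset ((Fin n → Bool) × (Fin m → Bool))).filter
      fun p => p.1 ≠ (fun _ => false) ∧ p.2 ≠ (fun _ => false)).image
    fun p => fun i j => (if p.1 i then 1 else 0) * (if p.2 j then 1 else 0)
/-- Feasibility for the master LP relaxation `MLP_exact`: variables `ξ_{ij} ≥ 0` for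
`(i,j) ∈ E`, `π_{ij} ∈ [0,1]` for `(i,j) ∉ E`, `q_Y ∈ [0,1]` for `Y ∈ R`, subject to
`Σ_Y Y_{ij} q_Y + ξ_{ij} ≥ 1` for `(i,j) ∈ E`, `Σ_Y Y_{ij} q_Y ≤ k π_{ij}` for
`(i,j) ∉ E`, and `Σ_Y q_Y ≤ k`. -/
def MLPexactFeasible (n m k : ℕ) (X : Fin n → Fin m → ℕ)
    (ξ π : Fin n → Fin m → ℝ) (q : (Fin n → Fin m → ℕ) → ℝ) : Prop :=
  (∀ i j, X i j = 1 → 0 ≤ ξ i j) ∧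
  (∀ i j, X i j ≠ 1 → π i j ∈ Set.Icc (0 : ℝ) 1) ∧
  (∀ Y ∈ Rset n m, q Y ∈ Set.Icc (0 : ℝ) 1) ∧
  (∀ i j, X i j = 1 → 1 ≤ (∑ Y ∈ Rset n m, (Y i j : ℝ) * q Y) + ξ i j) ∧
  (∀ i j, X i j ≠ 1 → (∑ Y ∈ Rset n m, (Y i j : ℝ) * q Y) ≤ k * π i j) ∧
  (∑ Y ∈ Rset n m, q Y) ≤ k

/-- The objective of `MLP_exact`: `Σ_{(i,j)∈E} ξ_{ij} + Σ_{(i,j)∉E} π_{ij}`. -/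
def MLPexactObj (n m : ℕ) (X : Fin n → Fin m → ℕ) (ξ π : Fin n → Fin m → ℝ) : ℝ :=
  (∑ p ∈ Eset n m X, ξ p.1 p.2) + ∑ p ∈ Ecomp n m X, π p.1 p.2

/-- Feasibility for the master LP `MLP(ρ)`: variables `ξ_{ij} ≥ 0` for `(i,j) ∈ E` and
`q_Y ∈ [0,1]` for `Y ∈ R`, subject to `Σ_Y Y_{ij} q_Y + ξ_{ij} ≥ 1` for `(i,j) ∈ E`
and `Σ_Y q_Y ≤ k`. -/
def MLPrhoFeasible (n m k : ℕ) (X : Fin n → Fin m → ℕ)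
    (ξ : Fin n → Fin m → ℝ) (q : (Fin n → Fin m → ℕ) → ℝ) : Prop :=
  (∀ i j, X i j = 1 → 0 ≤ ξ i j) ∧
  (∀ Y ∈ Rset n m, q Y ∈ Set.Icc (0 : ℝ) 1) ∧
  (∀ i j, X i j = 1 → 1 ≤ (∑ Y ∈ Rset n m, (Y i j : ℝ) * q Y) + ξ i j) ∧
  (∑ Y ∈ Rset n m, q Y) ≤ k

/-- The objective of `MLP(ρ)`:
`Σ_{(i,j)∈E} ξ_{ij} + ρ Σ_{Y∈R} (Σ_{(i,j)∉E} Y_{ij}) q_Y`. -/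
def MLPrhoObj (n m : ℕ) (X : Fin n → Fin m → ℕ) (ρ : ℝ)
    (ξ : Fin n → Fin m → ℝ) (q : (Fin n → Fin m → ℕ) → ℝ) : ℝ :=
  (∑ p ∈ Eset n m X, ξ p.1 p.2) +
    ρ * ∑ Y ∈ Rset n m, (∑ p ∈ Ecomp n m X, (Y p.1 p.2 : ℝ)) * q Y

lemma Rset_entry_le_one {n m : ℕ} {Y : Fin n → Fin m → ℕ} (hY : Y ∈ Rset n m)
    (i : Fin n) (j : Fin m) : Y i j ≤ 1 := by
  simp only [Rset, Finset.mem_image, Finset.mem_filter] at hY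
  obtain ⟨p, _, rfl⟩ := hY
  dsimp only
  split_ifs <;> simp

theorem stmt_10 (n m k : ℕ) (hk : 0 < k) (X : Fin n → Fin m → ℕ)
    (hX : ∀ i j, X i j = 0 ∨ X i j = 1) :
    sInf {v : ℝ | ∃ (ξ π : Fin n → Fin m → ℝ) (q : (Fin n → Fin m → ℕ) → ℝ),
        MLPexactFeasible n m k X ξ π q ∧ v = MLPexactObj n m X ξ π} =
      sInf {v : ℝ | ∃ (ξ : Fin n → Fin m → ℝ) (q : (Fin n → Fin m → ℕ) → ℝ),
        MLPrhoFeasible n m k X ξ q ∧ v = MLPrhoObj n m X (1 / k) ξ q} := by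
  have hkR : (0 : ℝ) < (k : ℝ) := by exact_mod_cast hk
  set A := {v : ℝ | ∃ (ξ π : Fin n → Fin m → ℝ) (q : (Fin n → Fin m → ℕ) → ℝ),
      MLPexactFeasible n m k X ξ π q ∧ v = MLPexactObj n m X ξ π} with hA
  set B := {v : ℝ | ∃ (ξ : Fin n → Fin m → ℝ) (q : (Fin n → Fin m → ℕ) → ℝ),
      MLPrhoFeasible n m k X ξ q ∧ v = MLPrhoObj n m X (1 / k) ξ q} with hB
  -- lower bounds
  have hA0 : ∀ v ∈ A, (0 : ℝ) ≤ v := by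
    rintro v ⟨ξ, π, q, ⟨hξ, hπ, hq, _, _, _⟩, rfl⟩
    apply add_nonneg
    · apply Finset.sum_nonneg
      intro p hp
      simp only [Eset, Finset.mem_filter] at hp
      exact hξ _ _ hp.2
    · apply Finset.sum_nonneg
      intro p hp
      simp only [Ecomp, Finset.mem_filter] at hp
      exact (hπ _ _ hp.2).1
  have hB0 : ∀ v ∈ B, (0 : ℝ) ≤ v := by
    rintro v ⟨ξ, q, ⟨hξ, hq, _, _⟩, rfl⟩
    apply add_nonneg
    · apply Finset.sum_nonneg
      intro p hp
      simp only [Eset, Finset.mem_filter] at hp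
      exact hξ _ _ hp.2
    · apply mul_nonneg (by positivity)
      apply Finset.sum_nonneg
      intro Y hY
      exact mul_nonneg (Finset.sum_nonneg fun p _ => by positivity) (hq Y hY).1
  have hAbdd : BddBelow A := ⟨0, hA0⟩
  have hBbdd : BddBelow B := ⟨0, hB0⟩
  -- nonempty
  have hAne : A.Nonempty := by
    refine ⟨MLPexactObj n m X (fun _ _ => 1) (fun _ _ => 0),
      fun _ _ => 1, fun _ _ => 0, fun _ => 0, ?_, rfl⟩
    refine ⟨fun _ _ _ => zero_le_one, fun _ _ _ => by norm_num,
      fun _ _ => by norm_num, fun i j _ => by simp, fun i j _ => by simp,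
      by simp⟩
  have hBne : B.Nonempty := by
    refine ⟨MLPrhoObj n m X (1 / k) (fun _ _ => 1) (fun _ => 0),
      fun _ _ => 1, fun _ => 0, ?_, rfl⟩
    refine ⟨fun _ _ _ => zero_le_one, fun _ _ => by norm_num,
      fun i j _ => by simp, by simp⟩
  -- sum swap
  have hswap : ∀ q : (Fin n → Fin m → ℕ) → ℝ,
      (∑ Y ∈ Rset n m, (∑ p ∈ Ecomp n m X, (Y p.1 p.2 : ℝ)) * q Y)
        = ∑ p ∈ Ecomp n m X, ∑ Y ∈ Rset n m, (Y p.1 p.2 : ℝ) * q Y := by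
    intro q
    rw [Finset.sum_comm]
    exact Finset.sum_congr rfl fun Y _ => Finset.sum_mul ..
  -- A dominates each element of B? We show: ∀ v ∈ A, ∃ w ∈ B, w ≤ v, and converse
  have hBA : ∀ v ∈ A, ∃ w ∈ B, w ≤ v := by
    rintro v ⟨ξ, π, q, ⟨hξ, hπ, hq, hc1, hc2, hc3⟩, rfl⟩
    refine ⟨MLPrhoObj n m X (1 / k) ξ q, ⟨ξ, q, ⟨hξ, hq, hc1, hc3⟩, rfl⟩, ?_⟩
    unfold MLPrhoObj MLPexactObj
    refine add_le_add le_rfl ?_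
    rw [hswap q, div_mul_eq_mul_div, one_mul, div_le_iff₀ hkR, Finset.sum_mul]
    apply Finset.sum_le_sum
    intro p hp
    simp only [Ecomp, Finset.mem_filter] at hp
    calc ∑ Y ∈ Rset n m, (Y p.1 p.2 : ℝ) * q Y ≤ k * π p.1 p.2 := hc2 _ _ hp.2
      _ = π p.1 p.2 * k := mul_comm _ _
  have hAB : ∀ v ∈ B, ∃ w ∈ A, w ≤ v := by
    rintro v ⟨ξ, q, ⟨hξ, hq, hc1, hc3⟩, rfl⟩
    set π : Fin n → Fin m → ℝ :=
      fun i j => (∑ Y ∈ Rset n m, (Y i j : ℝ) * q Y) / k with hπdef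
    have hSnn : ∀ i j, 0 ≤ ∑ Y ∈ Rset n m, (Y i j : ℝ) * q Y := by
      intro i j
      apply Finset.sum_nonneg
      intro Y hY
      exact mul_nonneg (by positivity) (hq Y hY).1
    have hSle : ∀ i j, (∑ Y ∈ Rset n m, (Y i j : ℝ) * q Y) ≤ k := by
      intro i j
      calc (∑ Y ∈ Rset n m, (Y i j : ℝ) * q Y) ≤ ∑ Y ∈ Rset n m, q Y := by
            apply Finset.sum_le_sum
            intro Y hY
            have h1 : (Y i j : ℝ) ≤ 1 := by
              exact_mod_cast Rset_entry_le_one hY i j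
            calc (Y i j : ℝ) * q Y ≤ 1 * q Y :=
                  mul_le_mul_of_nonneg_right h1 (hq Y hY).1
              _ = q Y := one_mul _
        _ ≤ k := hc3
    refine ⟨MLPexactObj n m X ξ π, ⟨ξ, π, q, ⟨hξ, ?_, hq, hc1, ?_, hc3⟩, rfl⟩, ?_⟩
    · intro i j _
      constructor
      · exact div_nonneg (hSnn i j) hkR.le
      · rw [div_le_one hkR]; exact hSle i j
    · intro i j _
      rw [hπdef]
      rw [mul_div_cancel₀ _ (ne_of_gt hkR)]
    · unfold MLPexactObj MLPrhoObj
      refine add_le_add le_rfl ?_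
      rw [hswap q, div_mul_eq_mul_div, one_mul]
      rw [Finset.sum_div]
  apply le_antisymm
  · apply le_csInf hBne
    intro v hv
    obtain ⟨w, hw, hwle⟩ := hAB v hv
    exact le_trans (csInf_le hAbdd hw) hwle
  · apply le_csInf hAne
    intro v hv
    obtain ⟨w, hw, hwle⟩ := hBA v hv
    exact le_trans (csInf_le hBbdd hw) hwle
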